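/- Let S = V(f) ⊂ ℙ³(ℂ) with f = w²z² + w(y³ + z·Q₂(x,y)) + H₄(x,y,z), where Q₂ = Σ_{i+j=2} q_{ij}x^i y^j and H₄ = Σ_{i+j+k=4} h_{ijk}x^i y^j z^k, satisfying h₄₀₀ = h₃₁₀ = q₂₀ = 0, h₃₀₁ ≠ 0 and h₂₂₀ = 1, suppose O = (0:0:0:1) is an isolated point of the singular locus of S, and assume S contains only finitely many lines. Let C = {(x:y:z:w) ∈ ℙ³(ℂ) : z = 0 and x² + h₁₃₀xy + h₀₄₀y² + yw = 0} be the conic residual to the line {y = z = 0} in the plane section S ∩ {z = 0}. Then at most 27 lines contained in S meet C. -/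

import Mathlib

open MvPolynomial

noncomputable section

abbrev P3 := Projectivization ℂ (Fin 4 → ℂ)

/-- The quotient topology on `ℙ³(ℂ)` induced from `ℂ⁴ ∖ {0}`. -/
instance : TopologicalSpace P3 :=
  inferInstanceAs (TopologicalSpace (Quotient (projectivizationSetoid ℂ (Fin 4 → ℂ))))

/-- A line in `ℙ³(ℂ)`: the projectivization of a 2-dimensional linear subspace of `ℂ⁴`. -/
def IsLine (L : Set P3) : Prop :=
  ∃ W : Submodule ℂ (Fin 4 → ℂ), Module.finrank ℂ W = 2 ∧
    L = {P : P3 | P.submodule ≤ W}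

/-- The zero set in `ℙ³(ℂ)` of a (homogeneous) polynomial. -/
def zeroSet (f : MvPolynomial (Fin 4) ℂ) : Set P3 :=
  {P | eval P.rep f = 0}

/-- `P` is a singular point of `V(f)`: `P ∈ V(f)` and all first partials vanish at `P`. -/
def IsSingPt (f : MvPolynomial (Fin 4) ℂ) (P : P3) : Prop :=
  eval P.rep f = 0 ∧ ∀ i, eval P.rep (pderiv i f) = 0

/-- `P` is an isolated point of the set `T`. -/
def IsIsolatedPtOf (P : P3) (T : Set P3) : Prop :=
  P ∈ T ∧ ∃ U : Set P3, IsOpen U ∧ P ∈ U ∧ U ∩ T = {P}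

/-- The point `O = (0:0:0:1)`. -/
def ptO : P3 :=
  Projectivization.mk ℂ ![0, 0, 0, 1] (by
    intro h
    simpa using congrFun h 3)

/-- `Q₂ = Σ_{i+j=2} q_{ij} xⁱ yʲ` built from a coefficient function `q`. -/
def quadForm (q : ℕ → ℕ → ℂ) : MvPolynomial (Fin 4) ℂ :=
  ∑ i ∈ Finset.range 3, C (q i (2 - i)) * X 0 ^ i * X 1 ^ (2 - i)

/-- `H₄ = Σ_{i+j+k=4} h_{ijk} xⁱ yʲ zᵏ` built from a coefficient function `h`. -/
def quartForm (h : ℕ → ℕ → ℕ → ℂ) : MvPolynomial (Fin 4) ℂ :=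
  ∑ i ∈ Finset.range 5, ∑ j ∈ Finset.range (5 - i),
    C (h i j (4 - i - j)) * X 0 ^ i * X 1 ^ j * X 2 ^ (4 - i - j)


namespace Q5A

/-- parametrization of the conic C minus the point O -/
def pvec (h : ℕ → ℕ → ℕ → ℂ) (s : ℂ) : Fin 4 → ℂ := ![s, 1, 0, -(s^2 + h 1 3 0 * s + h 0 4 0)]

def uvec (a d : ℂ) : Fin 4 → ℂ := ![a, 0, 1, d]

def dlt (q : ℕ → ℕ → ℂ) (h : ℕ → ℕ → ℕ → ℂ) (s a : ℂ) : ℂ := (((-1) : ℂ) * h 0 3 1 + (1 : ℂ) * q 0 2 * h 0 4 0 + ((-1) : ℂ) * a * h 1 3 0 + ((-1) : ℂ) * s * h 1 2 1 + (1 : ℂ) * s * q 0 2 * h 1 3 0 + (1 : ℂ) * s * q 1 1 * h 0 4 0 + ((-2) : ℂ) * s * a + ((-1) : ℂ) * s ^ 2 * h 2 1 1 + (1 : ℂ) * s ^ 2 * q 0 2 + (1 : ℂ) * s ^ 2 * q 1 1 * h 1 3 0 + ((-1) : ℂ) * s ^ 3 * h 3 0 1 + (1 : ℂ) * s ^ 3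 * q 1 1)

def E1 (q : ℕ → ℕ → ℂ) (h : ℕ → ℕ → ℕ → ℂ) (s a d : ℂ) : ℂ := ((1 : ℂ) * h 0 3 1 + ((-1) : ℂ) * q 0 2 * h 0 4 0 + (1 : ℂ) * d + (1 : ℂ) * a * h 1 3 0 + (1 : ℂ) * s * h 1 2 1 + ((-1) : ℂ) * s * q 0 2 * h 1 3 0 + ((-1) : ℂ) * s * q 1 1 * h 0 4 0 + (2 : ℂ) * s * a + (1 : ℂ) * s ^ 2 * h 2 1 1 + ((-1) : ℂ) * s ^ 2 * q 0 2 + ((-1) : ℂ) * s ^ 2 * q 1 1 * h 1 3 0 + (1 : ℂ) * s ^ 3 * h 3 0 1 + ((-1) : ℂ) * s ^ 3 * q 1 1)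

def E2 (q : ℕ → ℕ → ℂ) (h : ℕ → ℕ → ℕ → ℂ) (s a d : ℂ) : ℂ := ((1 : ℂ) * h 0 2 2 + (1 : ℂ) * h 0 4 0 ^ 2 + (1 : ℂ) * d * q 0 2 + (1 : ℂ) * a * h 1 2 1 + ((-1) : ℂ) * a * q 1 1 * h 0 4 0 + (1 : ℂ) * a ^ 2 + (1 : ℂ) * s * h 1 1 2 + (2 : ℂ) * s * h 1 3 0 * h 0 4 0 + (1 : ℂ) * s * d * q 1 1 + (2 : ℂ) * s * a * h 2 1 1 + ((-1) : ℂ) * s * a * q 1 1 * h 1 3 0 + (1 : ℂ) * s ^ 2 * h 2 0 2 + (2 : ℂ) * s ^ 2 * h 0 4 0 + (1 : ℂ) * s ^ 2 * h 1 3 0 ^ 2 + (3 : ℂ) * s ^ 2 * a * h 3 0 1 + ((-1) : ℂ) * s ^ 2 * a * q 1 1 + (2 : ℂ) * s ^ 3 * h 1 3 0 + (1 : ℂ) * s ^ 4)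

def E3 (q : ℕ → ℕ → ℂ) (h : ℕ → ℕ → ℕ → ℂ) (s a d : ℂ) : ℂ := ((1 : ℂ) * h 0 1 3 + ((-2) : ℂ) * d * h 0 4 0 + (1 : ℂ) * a * h 1 1 2 + (1 : ℂ) * a * d * q 1 1 + (1 : ℂ) * a ^ 2 * h 2 1 1 + (1 : ℂ) * s * h 1 0 3 + ((-2) : ℂ) * s * d * h 1 3 0 + (2 : ℂ) * s * a * h 2 0 2 + (3 : ℂ) * s * a ^ 2 * h 3 0 1 + ((-2) : ℂ) * s ^ 2 * d)

def E4 (q : ℕ → ℕ → ℂ) (h : ℕ → ℕ → ℕ → ℂ) (s a d : ℂ) : ℂ := ((1 : ℂ) * h 0 0 4 + (1 : ℂ) * d ^ 2 + (1 : ℂ) * a * h 1 0 3 + (1 : ℂ) * a ^ 2 * h 2 0 2 + (1 : ℂ) * a ^ 3 * h 3 0 1)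

def Pc1 (q : ℕ → ℕ → ℂ) (h : ℕ → ℕ → ℕ → ℂ) : Polynomial ℂ := Polynomial.C ((1 : ℂ) * h 1 2 1 + ((-1) : ℂ) * q 0 2 * h 1 3 0 + ((-1) : ℂ) * q 1 1 * h 0 4 0) + Polynomial.C ((2 : ℂ) * h 2 1 1 + ((-2) : ℂ) * q 0 2 + ((-2) : ℂ) * q 1 1 * h 1 3 0) * Polynomial.X + Polynomial.C ((3 : ℂ) * h 3 0 1 + ((-3) : ℂ) * q 1 1) * Polynomial.X ^ 2

def Pc0 (q : ℕ → ℕ → ℂ) (h : ℕ → ℕ → ℕ → ℂ) : Polynomial ℂ := Polynomial.C ((1 : ℂ) * h 0 2 2 + (1 : ℂ) * h 0 4 0 ^ 2 + ((-1) : ℂ) * q 0 2 * h 0 3 1 + (1 : ℂ) * q 0 2 ^ 2 * h 0 4 0) + Polynomial.C ((1 : ℂ) * h 1 1 2 + (2 : ℂ) * h 1 3 0 * h 0 4 0 + ((-1) : ℂ) * q 0 2 * h 1 2 1 + (1 : ℂ) * q 0 2 ^ 2 * h 1 3 0 + ((-1) : ℂ) * q 1 1 * h 0 3 1 + (2 :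 ℂ) * q 1 1 * q 0 2 * h 0 4 0) * Polynomial.X + Polynomial.C ((1 : ℂ) * h 2 0 2 + (2 : ℂ) * h 0 4 0 + (1 : ℂ) * h 1 3 0 ^ 2 + ((-1) : ℂ) * q 0 2 * h 2 1 1 + (1 : ℂ) * q 0 2 ^ 2 + ((-1) : ℂ) * q 1 1 * h 1 2 1 + (2 : ℂ) * q 1 1 * q 0 2 * h 1 3 0 + (1 : ℂ) * q 1 1 ^ 2 * h 0 4 0) * Polynomial.X ^ 2 + Polynomial.C ((2 : ℂ) * h 1 3 0 + ((-1) : ℂ) * q 0 2 * h 3 0 1 + ((-1) : ℂ) * q 1 1 * h 2 1 1 + (2 : ℂ) * q 1 1 * q 0 2 + (1 : ℂ) * q 1 1 ^ 2 * h 1 3 0) * Polynomial.X ^ 3 + Polynomial.C ((1 : ℂ) + ((-1) : ℂ) * q 1 1 * h 3 0 1 + (1 : ℂ) * q 1 1 ^ 2) * Polynomial.X ^ 4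

def Pg2 (q : ℕ → ℕ → ℂ) (h : ℕ → ℕ → ℕ → ℂ) : Polynomial ℂ := Polynomial.C ((1 : ℂ) * h 2 1 1 + ((-1) : ℂ) * q 1 1 * h 1 3 0) + Polynomial.C ((3 : ℂ) * h 3 0 1 + ((-2) : ℂ) * q 1 1) * Polynomial.X

def Pg1 (q : ℕ → ℕ → ℂ) (h : ℕ → ℕ → ℕ → ℂ) : Polynomial ℂ := Polynomial.C ((1 : ℂ) * h 1 1 2 + (2 : ℂ) * h 1 3 0 * h 0 4 0 + ((-1) : ℂ) * q 1 1 * h 0 3 1 + (1 : ℂ) * q 1 1 * q 0 2 * h 0 4 0) + Polynomial.C ((2 : ℂ) * h 2 0 2 + (4 : ℂ) * h 0 4 0 + (2 : ℂ) * h 1 3 0 ^ 2 + ((-1) : ℂ) * q 1 1 * h 1 2 1 + (1 : ℂ) * q 1 1 * q 0 2 * h 1 3 0 + (1 : ℂ) * q 1 1 ^ 2 * h 0 4 0) * Polynomial.X + Polynomial.C ((6 : ℂ) * h 1 3 0 + ((-1) : ℂ) * q 1 1 * h 2 1 1 + (1 : ℂ) * q 1 1 * q 0 2 + (1 : ℂ)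 * q 1 1 ^ 2 * h 1 3 0) * Polynomial.X ^ 2 + Polynomial.C ((4 : ℂ) + ((-1) : ℂ) * q 1 1 * h 3 0 1 + (1 : ℂ) * q 1 1 ^ 2) * Polynomial.X ^ 3

def Pg0 (q : ℕ → ℕ → ℂ) (h : ℕ → ℕ → ℕ → ℂ) : Polynomial ℂ := Polynomial.C ((1 : ℂ) * h 0 1 3 + (2 : ℂ) * h 0 4 0 * h 0 3 1 + ((-2) : ℂ) * q 0 2 * h 0 4 0 ^ 2) + Polynomial.C ((1 : ℂ) * h 1 0 3 + (2 : ℂ) * h 0 4 0 * h 1 2 1 + (2 : ℂ) * h 1 3 0 * h 0 3 1 + ((-4) : ℂ) * q 0 2 * h 1 3 0 * h 0 4 0 + ((-2) : ℂ) * q 1 1 * h 0 4 0 ^ 2) * Polynomial.X + Polynomial.C ((2 : ℂ) * h 0 3 1 + (2 : ℂ) * h 0 4 0 * h 2 1 1 + (2 : ℂ) * h 1 3 0 * h 1 2 1 + ((-4) : ℂ) * q 0 2 * h 0 4 0 + ((-2) : ℂ) * q 0 2 * h 1 3 0 ^ 2 + ((-4) : ℂ) * q 1 1 * h 1 3 0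 * h 0 4 0) * Polynomial.X ^ 2 + Polynomial.C ((2 : ℂ) * h 1 2 1 + (2 : ℂ) * h 0 4 0 * h 3 0 1 + (2 : ℂ) * h 1 3 0 * h 2 1 1 + ((-4) : ℂ) * q 0 2 * h 1 3 0 + ((-4) : ℂ) * q 1 1 * h 0 4 0 + ((-2) : ℂ) * q 1 1 * h 1 3 0 ^ 2) * Polynomial.X ^ 3 + Polynomial.C ((2 : ℂ) * h 2 1 1 + (2 : ℂ) * h 1 3 0 * h 3 0 1 + ((-2) : ℂ) * q 0 2 + ((-4) : ℂ) * q 1 1 * h 1 3 0) * Polynomial.X ^ 4 + Polynomial.C ((2 : ℂ) * h 3 0 1 + ((-2) : ℂ) * q 1 1) * Polynomial.X ^ 5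

def Pe2 (q : ℕ → ℕ → ℂ) (h : ℕ → ℕ → ℕ → ℂ) : Polynomial ℂ := Polynomial.C ((1 : ℂ) * h 2 0 2 + (1 : ℂ) * h 1 3 0 ^ 2) + Polynomial.C ((4 : ℂ) * h 1 3 0) * Polynomial.X + Polynomial.C ((4 : ℂ)) * Polynomial.X ^ 2

def Pe1 (q : ℕ → ℕ → ℂ) (h : ℕ → ℕ → ℕ → ℂ) : Polynomial ℂ := Polynomial.C ((1 : ℂ) * h 1 0 3 + (2 : ℂ) * h 1 3 0 * h 0 3 1 + ((-2) : ℂ) * q 0 2 * h 1 3 0 * h 0 4 0) + Polynomial.C ((4 : ℂ) * h 0 3 1 + (2 : ℂ) * h 1 3 0 * h 1 2 1 + ((-4) : ℂ) * q 0 2 * h 0 4 0 + ((-2) : ℂ) * q 0 2 * h 1 3 0 ^ 2 + ((-2) : ℂ) * q 1 1 * h 1 3 0 * h 0 4 0) * Polynomial.X + Polynomial.C ((4 : ℂ) * h 1 2 1 + (2 : ℂ) * h 1 3 0 * h 2 1 1 + ((-6) : ℂ) * q 0 2 * h 1 3 0 + ((-4) : ℂ) * q 1 1 * h 0 4 0 +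 ((-2) : ℂ) * q 1 1 * h 1 3 0 ^ 2) * Polynomial.X ^ 2 + Polynomial.C ((4 : ℂ) * h 2 1 1 + (2 : ℂ) * h 1 3 0 * h 3 0 1 + ((-4) : ℂ) * q 0 2 + ((-6) : ℂ) * q 1 1 * h 1 3 0) * Polynomial.X ^ 3 + Polynomial.C ((4 : ℂ) * h 3 0 1 + ((-4) : ℂ) * q 1 1) * Polynomial.X ^ 4

def Pe0 (q : ℕ → ℕ → ℂ) (h : ℕ → ℕ → ℕ → ℂ) : Polynomial ℂ := Polynomial.C ((1 : ℂ) * h 0 0 4 + (1 : ℂ) * h 0 3 1 ^ 2 + ((-2) : ℂ) * q 0 2 * h 0 4 0 * h 0 3 1 + (1 : ℂ) * q 0 2 ^ 2 * h 0 4 0 ^ 2) + Polynomial.C ((2 : ℂ) * h 1 2 1 * h 0 3 1 + ((-2) : ℂ) * q 0 2 * h 0 4 0 * h 1 2 1 + ((-2) : ℂ) * q 0 2 * h 1 3 0 * h 0 3 1 + (2 : ℂ) * q 0 2 ^ 2 * h 1 3 0 * h 0 4 0 + ((-2) : ℂ) * q 1 1 * h 0 4 0 * h 0 3 1 + (2 :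 ℂ) * q 1 1 * q 0 2 * h 0 4 0 ^ 2) * Polynomial.X + Polynomial.C ((1 : ℂ) * h 1 2 1 ^ 2 + (2 : ℂ) * h 2 1 1 * h 0 3 1 + ((-2) : ℂ) * q 0 2 * h 0 3 1 + ((-2) : ℂ) * q 0 2 * h 0 4 0 * h 2 1 1 + ((-2) : ℂ) * q 0 2 * h 1 3 0 * h 1 2 1 + (2 : ℂ) * q 0 2 ^ 2 * h 0 4 0 + (1 : ℂ) * q 0 2 ^ 2 * h 1 3 0 ^ 2 + ((-2) : ℂ) * q 1 1 * h 0 4 0 * h 1 2 1 + ((-2) : ℂ) * q 1 1 * h 1 3 0 * h 0 3 1 + (4 : ℂ) * q 1 1 * q 0 2 * h 1 3 0 * h 0 4 0 + (1 : ℂ) * q 1 1 ^ 2 * h 0 4 0 ^ 2) * Polynomial.X ^ 2 + Polynomial.C ((2 : ℂ) * h 2 1 1 * h 1 2 1 + (2 : ℂ) * h 3 0 1 * h 0 3 1 + ((-2) : ℂ) * q 0 2 * h 1 2 1 + ((-2) : ℂ) * q 0 2 * h 0 4 0 * h 3 0 1 + ((-2) : ℂ) * q 0 2 * h 1 3 0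 * h 2 1 1 + (2 : ℂ) * q 0 2 ^ 2 * h 1 3 0 + ((-2) : ℂ) * q 1 1 * h 0 3 1 + ((-2) : ℂ) * q 1 1 * h 0 4 0 * h 2 1 1 + ((-2) : ℂ) * q 1 1 * h 1 3 0 * h 1 2 1 + (4 : ℂ) * q 1 1 * q 0 2 * h 0 4 0 + (2 : ℂ) * q 1 1 * q 0 2 * h 1 3 0 ^ 2 + (2 : ℂ) * q 1 1 ^ 2 * h 1 3 0 * h 0 4 0) * Polynomial.X ^ 3 + Polynomial.C ((1 : ℂ) * h 2 1 1 ^ 2 + (2 : ℂ) * h 3 0 1 * h 1 2 1 + ((-2) : ℂ) * q 0 2 * h 2 1 1 + ((-2) : ℂ) * q 0 2 * h 1 3 0 * h 3 0 1 + (1 : ℂ) * q 0 2 ^ 2 + ((-2) : ℂ) * q 1 1 * h 1 2 1 + ((-2) : ℂ) * q 1 1 * h 0 4 0 * h 3 0 1 + ((-2) : ℂ) * q 1 1 * h 1 3 0 * h 2 1 1 + (4 : ℂ) * q 1 1 * q 0 2 * h 1 3 0 + (2 : ℂ) * q 1 1 ^ 2 * h 0 4 0 + (1 : ℂ) * q 1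 1 ^ 2 * h 1 3 0 ^ 2) * Polynomial.X ^ 4 + Polynomial.C ((2 : ℂ) * h 3 0 1 * h 2 1 1 + ((-2) : ℂ) * q 0 2 * h 3 0 1 + ((-2) : ℂ) * q 1 1 * h 2 1 1 + ((-2) : ℂ) * q 1 1 * h 1 3 0 * h 3 0 1 + (2 : ℂ) * q 1 1 * q 0 2 + (2 : ℂ) * q 1 1 ^ 2 * h 1 3 0) * Polynomial.X ^ 5 + Polynomial.C ((1 : ℂ) * h 3 0 1 ^ 2 + ((-2) : ℂ) * q 1 1 * h 3 0 1 + (1 : ℂ) * q 1 1 ^ 2) * Polynomial.X ^ 6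

def Pr1 (q : ℕ → ℕ → ℂ) (h : ℕ → ℕ → ℕ → ℂ) : Polynomial ℂ := Pe1 q h - Polynomial.C (h 3 0 1) * Pc0 q h - (Pe2 q h - Polynomial.C (h 3 0 1) * Pc1 q h) * Pc1 q h

def Pr0 (q : ℕ → ℕ → ℂ) (h : ℕ → ℕ → ℕ → ℂ) : Polynomial ℂ := Pe0 q h - (Pe2 q h - Polynomial.C (h 3 0 1) * Pc1 q h) * Pc0 q h

def Ps1 (q : ℕ → ℕ → ℂ) (h : ℕ → ℕ → ℕ → ℂ) : Polynomial ℂ := Pg1 q h - Pg2 q h * Pc1 q h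

def Ps0 (q : ℕ → ℕ → ℂ) (h : ℕ → ℕ → ℕ → ℂ) : Polynomial ℂ := Pg0 q h - Pg2 q h * Pc0 q h

lemma evPc1 (q : ℕ → ℕ → ℂ) (h : ℕ → ℕ → ℕ → ℂ) (s : ℂ) : (Pc1 q h).eval s = ((1 : ℂ) * h 1 2 1 + ((-1) : ℂ) * q 0 2 * h 1 3 0 + ((-1) : ℂ) * q 1 1 * h 0 4 0 + (2 : ℂ) * s * h 2 1 1 + ((-2) : ℂ) * s * q 0 2 + ((-2) : ℂ) * s * q 1 1 * h 1 3 0 + (3 : ℂ) * s ^ 2 * h 3 0 1 + ((-3) : ℂ) * s ^ 2 * q 1 1) := by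
  simp [Pc1]
  try ring

lemma evPc0 (q : ℕ → ℕ → ℂ) (h : ℕ → ℕ → ℕ → ℂ) (s : ℂ) : (Pc0 q h).eval s = ((1 : ℂ) * h 0 2 2 + (1 : ℂ) * h 0 4 0 ^ 2 + ((-1) : ℂ) * q 0 2 * h 0 3 1 + (1 : ℂ) * q 0 2 ^ 2 * h 0 4 0 + (1 : ℂ) * s * h 1 1 2 + (2 : ℂ) * s * h 1 3 0 * h 0 4 0 + ((-1) : ℂ) * s * q 0 2 * h 1 2 1 + (1 : ℂ) * s * q 0 2 ^ 2 * h 1 3 0 + ((-1) : ℂ) * s * q 1 1 * h 0 3 1 + (2 : ℂ) * s * q 1 1 * q 0 2 * h 0 4 0 + (1 : ℂ) * s ^ 2 * h 2 0 2 + (2 : ℂ) * s ^ 2 * h 0 4 0 + (1 : ℂ) * s ^ 2 * h 1 3 0 ^ 2 + ((-1) : ℂ) * s ^ 2 * q 0 2 * h 2 1 1 + (1 : ℂ) * s ^ 2 * q 0 2 ^ 2 + ((-1) : ℂ) * s ^ 2 * q 1 1 * h 1 2 1 + (2 : ℂ) * s ^ 2 * q 1 1 * q 0 2 * h 1 3 0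 + (1 : ℂ) * s ^ 2 * q 1 1 ^ 2 * h 0 4 0 + (2 : ℂ) * s ^ 3 * h 1 3 0 + ((-1) : ℂ) * s ^ 3 * q 0 2 * h 3 0 1 + ((-1) : ℂ) * s ^ 3 * q 1 1 * h 2 1 1 + (2 : ℂ) * s ^ 3 * q 1 1 * q 0 2 + (1 : ℂ) * s ^ 3 * q 1 1 ^ 2 * h 1 3 0 + (1 : ℂ) * s ^ 4 + ((-1) : ℂ) * s ^ 4 * q 1 1 * h 3 0 1 + (1 : ℂ) * s ^ 4 * q 1 1 ^ 2) := by
  simp [Pc0]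
  try ring

lemma evPg2 (q : ℕ → ℕ → ℂ) (h : ℕ → ℕ → ℕ → ℂ) (s : ℂ) : (Pg2 q h).eval s = ((1 : ℂ) * h 2 1 1 + ((-1) : ℂ) * q 1 1 * h 1 3 0 + (3 : ℂ) * s * h 3 0 1 + ((-2) : ℂ) * s * q 1 1) := by
  simp [Pg2]
  try ring

lemma evPg1 (q : ℕ → ℕ → ℂ) (h : ℕ → ℕ → ℕ → ℂ) (s : ℂ) : (Pg1 q h).eval s = ((1 : ℂ) * h 1 1 2 + (2 : ℂ) * h 1 3 0 * h 0 4 0 + ((-1) : ℂ) * q 1 1 * h 0 3 1 + (1 : ℂ) * q 1 1 * q 0 2 * h 0 4 0 + (2 : ℂ) * s * h 2 0 2 + (4 : ℂ) * s * h 0 4 0 + (2 : ℂ) * s * h 1 3 0 ^ 2 + ((-1) : ℂ) * s * q 1 1 * h 1 2 1 + (1 : ℂ) * s * q 1 1 * q 0 2 * h 1 3 0 + (1 : ℂ) * s * q 1 1 ^ 2 * h 0 4 0 + (6 : ℂ) * s ^ 2 * h 1 3 0 + ((-1) : ℂ) * s ^ 2 * q 1 1 * h 2 1 1 + (1 : ℂ)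 * s ^ 2 * q 1 1 * q 0 2 + (1 : ℂ) * s ^ 2 * q 1 1 ^ 2 * h 1 3 0 + (4 : ℂ) * s ^ 3 + ((-1) : ℂ) * s ^ 3 * q 1 1 * h 3 0 1 + (1 : ℂ) * s ^ 3 * q 1 1 ^ 2) := by
  simp [Pg1]
  try ring

lemma evPg0 (q : ℕ → ℕ → ℂ) (h : ℕ → ℕ → ℕ → ℂ) (s : ℂ) : (Pg0 q h).eval s = ((1 : ℂ) * h 0 1 3 + (2 : ℂ) * h 0 4 0 * h 0 3 1 + ((-2) : ℂ) * q 0 2 * h 0 4 0 ^ 2 + (1 : ℂ) * s * h 1 0 3 + (2 : ℂ) * s * h 0 4 0 * h 1 2 1 + (2 : ℂ) * s * h 1 3 0 * h 0 3 1 + ((-4) : ℂ) * s * q 0 2 * h 1 3 0 * h 0 4 0 + ((-2) : ℂ) * s * q 1 1 * h 0 4 0 ^ 2 + (2 : ℂ) * s ^ 2 * h 0 3 1 + (2 : ℂ) * s ^ 2 * h 0 4 0 * h 2 1 1 + (2 : ℂ) * s ^ 2 * h 1 3 0 * h 1 2 1 + ((-4) : ℂ) * s ^ 2 * q 0 2 *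 h 0 4 0 + ((-2) : ℂ) * s ^ 2 * q 0 2 * h 1 3 0 ^ 2 + ((-4) : ℂ) * s ^ 2 * q 1 1 * h 1 3 0 * h 0 4 0 + (2 : ℂ) * s ^ 3 * h 1 2 1 + (2 : ℂ) * s ^ 3 * h 0 4 0 * h 3 0 1 + (2 : ℂ) * s ^ 3 * h 1 3 0 * h 2 1 1 + ((-4) : ℂ) * s ^ 3 * q 0 2 * h 1 3 0 + ((-4) : ℂ) * s ^ 3 * q 1 1 * h 0 4 0 + ((-2) : ℂ) * s ^ 3 * q 1 1 * h 1 3 0 ^ 2 + (2 : ℂ) * s ^ 4 * h 2 1 1 + (2 : ℂ) * s ^ 4 * h 1 3 0 * h 3 0 1 + ((-2) : ℂ) * s ^ 4 * q 0 2 + ((-4) : ℂ) * s ^ 4 * q 1 1 * h 1 3 0 + (2 : ℂ) * s ^ 5 * h 3 0 1 + ((-2) : ℂ) * s ^ 5 * q 1 1) := by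
  simp [Pg0]
  try ring

lemma evPe2 (q : ℕ → ℕ → ℂ) (h : ℕ → ℕ → ℕ → ℂ) (s : ℂ) : (Pe2 q h).eval s = ((1 : ℂ) * h 2 0 2 + (1 : ℂ) * h 1 3 0 ^ 2 + (4 : ℂ) * s * h 1 3 0 + (4 : ℂ) * s ^ 2) := by
  simp [Pe2]
  try ring

lemma evPe1 (q : ℕ → ℕ → ℂ) (h : ℕ → ℕ → ℕ → ℂ) (s : ℂ) : (Pe1 q h).eval s = ((1 : ℂ) * h 1 0 3 + (2 : ℂ) * h 1 3 0 * h 0 3 1 + ((-2) : ℂ) * q 0 2 * h 1 3 0 * h 0 4 0 + (4 : ℂ) * s * h 0 3 1 + (2 : ℂ) * s * h 1 3 0 * h 1 2 1 + ((-4) : ℂ) * s * q 0 2 * h 0 4 0 + ((-2) : ℂ) * s * q 0 2 * h 1 3 0 ^ 2 + ((-2) : ℂ) * s * q 1 1 * h 1 3 0 * h 0 4 0 + (4 : ℂ) * s ^ 2 * h 1 2 1 + (2 : ℂ) * s ^ 2 * h 1 3 0 * h 2 1 1 + ((-6) : ℂ) * s ^ 2 * q 0 2 * h 1 3 0 + ((-4)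 : ℂ) * s ^ 2 * q 1 1 * h 0 4 0 + ((-2) : ℂ) * s ^ 2 * q 1 1 * h 1 3 0 ^ 2 + (4 : ℂ) * s ^ 3 * h 2 1 1 + (2 : ℂ) * s ^ 3 * h 1 3 0 * h 3 0 1 + ((-4) : ℂ) * s ^ 3 * q 0 2 + ((-6) : ℂ) * s ^ 3 * q 1 1 * h 1 3 0 + (4 : ℂ) * s ^ 4 * h 3 0 1 + ((-4) : ℂ) * s ^ 4 * q 1 1) := by
  simp [Pe1]
  try ring

lemma evPe0 (q : ℕ → ℕ → ℂ) (h : ℕ → ℕ → ℕ → ℂ) (s : ℂ) : (Pe0 q h).eval s = ((1 : ℂ) * h 0 0 4 + (1 : ℂ) * h 0 3 1 ^ 2 + ((-2) : ℂ) * q 0 2 * h 0 4 0 * h 0 3 1 + (1 : ℂ) * q 0 2 ^ 2 * h 0 4 0 ^ 2 + (2 : ℂ) * s * h 1 2 1 * h 0 3 1 + ((-2) : ℂ) * s * q 0 2 * h 0 4 0 * h 1 2 1 + ((-2) : ℂ) * s * q 0 2 * h 1 3 0 * h 0 3 1 + (2 : ℂ) * s * q 0 2 ^ 2 * h 1 3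 0 * h 0 4 0 + ((-2) : ℂ) * s * q 1 1 * h 0 4 0 * h 0 3 1 + (2 : ℂ) * s * q 1 1 * q 0 2 * h 0 4 0 ^ 2 + (1 : ℂ) * s ^ 2 * h 1 2 1 ^ 2 + (2 : ℂ) * s ^ 2 * h 2 1 1 * h 0 3 1 + ((-2) : ℂ) * s ^ 2 * q 0 2 * h 0 3 1 + ((-2) : ℂ) * s ^ 2 * q 0 2 * h 0 4 0 * h 2 1 1 + ((-2) : ℂ) * s ^ 2 * q 0 2 * h 1 3 0 * h 1 2 1 + (2 : ℂ) * s ^ 2 * q 0 2 ^ 2 * h 0 4 0 + (1 : ℂ) * s ^ 2 * q 0 2 ^ 2 * h 1 3 0 ^ 2 + ((-2) : ℂ) * s ^ 2 * q 1 1 * h 0 4 0 * h 1 2 1 + ((-2) : ℂ) * s ^ 2 * q 1 1 * h 1 3 0 * h 0 3 1 + (4 : ℂ) * s ^ 2 * q 1 1 * q 0 2 * h 1 3 0 * h 0 4 0 + (1 : ℂ) * s ^ 2 * q 1 1 ^ 2 * h 0 4 0 ^ 2 + (2 : ℂ) * s ^ 3 * h 2 1 1 * h 1 2 1 + (2 :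 ℂ) * s ^ 3 * h 3 0 1 * h 0 3 1 + ((-2) : ℂ) * s ^ 3 * q 0 2 * h 1 2 1 + ((-2) : ℂ) * s ^ 3 * q 0 2 * h 0 4 0 * h 3 0 1 + ((-2) : ℂ) * s ^ 3 * q 0 2 * h 1 3 0 * h 2 1 1 + (2 : ℂ) * s ^ 3 * q 0 2 ^ 2 * h 1 3 0 + ((-2) : ℂ) * s ^ 3 * q 1 1 * h 0 3 1 + ((-2) : ℂ) * s ^ 3 * q 1 1 * h 0 4 0 * h 2 1 1 + ((-2) : ℂ) * s ^ 3 * q 1 1 * h 1 3 0 * h 1 2 1 + (4 : ℂ) * s ^ 3 * q 1 1 * q 0 2 * h 0 4 0 + (2 : ℂ) * s ^ 3 * q 1 1 * q 0 2 * h 1 3 0 ^ 2 + (2 : ℂ) * s ^ 3 * q 1 1 ^ 2 * h 1 3 0 * h 0 4 0 + (1 : ℂ) * s ^ 4 * h 2 1 1 ^ 2 + (2 : ℂ) * s ^ 4 * h 3 0 1 * h 1 2 1 + ((-2) : ℂ) * s ^ 4 * q 0 2 * h 2 1 1 + ((-2) : ℂ) * s ^ 4 * q 0 2 * h 1 3 0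 * h 3 0 1 + (1 : ℂ) * s ^ 4 * q 0 2 ^ 2 + ((-2) : ℂ) * s ^ 4 * q 1 1 * h 1 2 1 + ((-2) : ℂ) * s ^ 4 * q 1 1 * h 0 4 0 * h 3 0 1 + ((-2) : ℂ) * s ^ 4 * q 1 1 * h 1 3 0 * h 2 1 1 + (4 : ℂ) * s ^ 4 * q 1 1 * q 0 2 * h 1 3 0 + (2 : ℂ) * s ^ 4 * q 1 1 ^ 2 * h 0 4 0 + (1 : ℂ) * s ^ 4 * q 1 1 ^ 2 * h 1 3 0 ^ 2 + (2 : ℂ) * s ^ 5 * h 3 0 1 * h 2 1 1 + ((-2) : ℂ) * s ^ 5 * q 0 2 * h 3 0 1 + ((-2) : ℂ) * s ^ 5 * q 1 1 * h 2 1 1 + ((-2) : ℂ) * s ^ 5 * q 1 1 * h 1 3 0 * h 3 0 1 + (2 : ℂ) * s ^ 5 * q 1 1 * q 0 2 + (2 : ℂ) * s ^ 5 * q 1 1 ^ 2 * h 1 3 0 + (1 : ℂ) * s ^ 6 * h 3 0 1 ^ 2 + ((-2) : ℂ) * s ^ 6 * q 1 1 * h 3 0 1 + (1 : ℂ) * s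 ^ 6 * q 1 1 ^ 2) := by
  simp [Pe0]
  try ring

variable (q : ℕ → ℕ → ℂ) (h : ℕ → ℕ → ℕ → ℂ) (f : MvPolynomial (Fin 4) ℂ)

lemma eval_f (hf : f = X 3 ^ 2 * X 2 ^ 2 + X 3 * (X 1 ^ 3 + X 2 * quadForm q) + quartForm h)
    (h400 : h 4 0 0 = 0) (h310 : h 3 1 0 = 0) (q20 : q 2 0 = 0) (h220 : h 2 2 0 = 1)
    (v : Fin 4 → ℂ) :
    eval v f = v 3 ^ 2 * v 2 ^ 2
      + v 3 * (v 1 ^ 3 + v 2 * (q 1 1 * (v 0 * v 1) + q 0 2 * v 1 ^ 2))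
      + (h 3 0 1 * (v 0 ^ 3 * v 2) + h 2 1 1 * (v 0 ^ 2 * v 1 * v 2) + h 2 0 2 * (v 0 ^ 2 * v 2 ^ 2)
        + v 0 ^ 2 * v 1 ^ 2 + h 1 3 0 * (v 0 * v 1 ^ 3) + h 1 2 1 * (v 0 * v 1 ^ 2 * v 2)
        + h 1 1 2 * (v 0 * v 1 * v 2 ^ 2) + h 1 0 3 * (v 0 * v 2 ^ 3) + h 0 4 0 * v 1 ^ 4
        + h 0 3 1 * (v 1 ^ 3 * v 2) + h 0 2 2 * (v 1 ^ 2 * v 2 ^ 2) + h 0 1 3 * (v 1 * v 2 ^ 3)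
        + h 0 0 4 * v 2 ^ 4) := by
  subst hf
  simp [quadForm, quartForm, Finset.sum_range_succ, h400, h310, q20, h220]
  ring

lemma master (hf : f = X 3 ^ 2 * X 2 ^ 2 + X 3 * (X 1 ^ 3 + X 2 * quadForm q) + quartForm h)
    (h400 : h 4 0 0 = 0) (h310 : h 3 1 0 = 0) (q20 : q 2 0 = 0) (h220 : h 2 2 0 = 1)
    (al be s a d : ℂ) :
    eval (al • pvec h s + be • uvec a d) f
      = al ^ 3 * be * E1 q h s a d + al ^ 2 * be ^ 2 * E2 q h s a d
        + al * be ^ 3 * E3 q h s a d + be ^ 4 * E4 q h s a d := by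
  rw [eval_f q h f hf h400 h310 q20 h220]
  simp only [Pi.add_apply, Pi.smul_apply, smul_eq_mul, pvec, uvec,
    Matrix.cons_val_zero, Matrix.cons_val_one, Matrix.head_cons,
    Matrix.cons_val_two, Matrix.tail_cons, Matrix.cons_val_three,
    E1, E2, E3, E4]
  ring

def PR (q : ℕ → ℕ → ℂ) (h : ℕ → ℕ → ℕ → ℂ) : Polynomial ℂ :=
  1 * Pr0 q h ^ 2 - Pc1 q h * (Pr0 q h * Pr1 q h) + Pc0 q h * Pr1 q h ^ 2

def PW (q : ℕ → ℕ → ℂ) (h : ℕ → ℕ → ℕ → ℂ) : Polynomial ℂ :=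
  Pg2 q h * Pr0 q h ^ 2 - Pg1 q h * (Pr0 q h * Pr1 q h) + Pg0 q h * Pr1 q h ^ 2

def PRp (q : ℕ → ℕ → ℂ) (h : ℕ → ℕ → ℕ → ℂ) : Polynomial ℂ :=
  1 * Ps0 q h ^ 2 - Pc1 q h * (Ps0 q h * Ps1 q h) + Pc0 q h * Ps1 q h ^ 2

variable (q : ℕ → ℕ → ℂ) (h : ℕ → ℕ → ℕ → ℂ)

lemma E1_eq (s a d : ℂ) : E1 q h s a d = d - dlt q h s a := by
  simp only [E1, dlt]; ring

lemma keyE2 (s a : ℂ) :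
    E2 q h s a (dlt q h s a) = a ^ 2 + (Pc1 q h).eval s * a + (Pc0 q h).eval s := by
  rw [evPc1, evPc0]; simp only [E2, dlt]; ring

lemma keyE3 (s a : ℂ) :
    E3 q h s a (dlt q h s a)
      = (Pg2 q h).eval s * a ^ 2 + (Pg1 q h).eval s * a + (Pg0 q h).eval s := by
  rw [evPg2, evPg1, evPg0]; simp only [E3, dlt]; ring

lemma keyE4 (s a : ℂ) :
    E4 q h s a (dlt q h s a)
      = (h 3 0 1 * a + ((Pe2 q h).eval s - h 3 0 1 * (Pc1 q h).eval s))
          * (a ^ 2 + (Pc1 q h).eval s * a + (Pc0 q h).eval s)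
        + (Pr1 q h).eval s * a + (Pr0 q h).eval s := by
  simp only [Pr1, Pr0, Polynomial.eval_sub, Polynomial.eval_mul, Polynomial.eval_C]
  rw [evPc1, evPc0, evPe2, evPe1, evPe0]; simp only [E4, dlt]; ring

lemma keyS (s a : ℂ) :
    (Ps1 q h).eval s * a + (Ps0 q h).eval s
      = ((Pg2 q h).eval s * a ^ 2 + (Pg1 q h).eval s * a + (Pg0 q h).eval s)
        - (Pg2 q h).eval s * (a ^ 2 + (Pc1 q h).eval s * a + (Pc0 q h).eval s) := by
  simp only [Ps1, Ps0, Polynomial.eval_sub, Polynomial.eval_mul]; ring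

/-- The core counting lemma. -/
lemma core (u1 u0 g2 g1 g0 c1 c0 S : Polynomial ℂ)
    (hSdef : S = g2 * u0 ^ 2 - g1 * (u0 * u1) + g0 * u1 ^ 2)
    (hS : S ≠ 0)
    (T : Finset (ℂ × ℂ))
    (hlin : ∀ x ∈ T, u1.eval x.1 * x.2 + u0.eval x.1 = 0)
    (hquad : ∀ x ∈ T, g2.eval x.1 * x.2 ^ 2 + g1.eval x.1 * x.2 + g0.eval x.1 = 0)
    (hmon : ∀ x ∈ T, x.2 ^ 2 + c1.eval x.1 * x.2 + c0.eval x.1 = 0) :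
    T.card ≤ S.natDegree := by
  classical
  have hroot : ∀ x ∈ T, S.eval x.1 = 0 := by
    intro x hx
    have h1 := hlin x hx; have h2 := hquad x hx
    rw [hSdef]
    simp only [Polynomial.eval_add, Polynomial.eval_sub, Polynomial.eval_mul, Polynomial.eval_pow]
    linear_combination (g2.eval x.1 * (u0.eval x.1 - u1.eval x.1 * x.2)
        - g1.eval x.1 * u1.eval x.1) * h1 + (u1.eval x.1) ^ 2 * h2
  rw [Finset.card_eq_sum_card_fiberwise
    (f := Prod.fst) (t := T.image Prod.fst) (fun x hx => Finset.mem_image_of_mem _ hx)]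
  have himroot : ∀ s ∈ T.image Prod.fst, S.IsRoot s := by
    intro s hs
    obtain ⟨x, hxT, rfl⟩ := Finset.mem_image.1 hs
    exact hroot x hxT
  have hfib : ∀ s ∈ T.image Prod.fst,
      (T.filter fun x => x.1 = s).card ≤ Polynomial.rootMultiplicity s S := by
    intro s hs
    set F := T.filter fun x => x.1 = s with hF
    have hF2 : F.card ≤ 2 := by
      set Pq : Polynomial ℂ := Polynomial.X ^ 2 + Polynomial.C (c1.eval s) * Polynomial.X
        + Polynomial.C (c0.eval s) with hPq
      have hPqd : Pq.natDegree = 2 := by rw [hPq]; compute_degree!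
      have hPq0 : Pq ≠ 0 := fun h0 => by simp [h0] at hPqd
      have himg : F.image Prod.snd ⊆ Pq.roots.toFinset := by
        intro a ha
        obtain ⟨x, hxF, rfl⟩ := Finset.mem_image.1 ha
        obtain ⟨hxT, hxs⟩ := Finset.mem_filter.1 hxF
        rw [Multiset.mem_toFinset, Polynomial.mem_roots hPq0]
        have := hmon x hxT
        rw [hxs] at this
        simp only [Polynomial.IsRoot, hPq, Polynomial.eval_add, Polynomial.eval_pow,
          Polynomial.eval_mul, Polynomial.eval_C, Polynomial.eval_X]
        linear_combination this
      have hinj : Set.InjOn Prod.snd (↑F : Set (ℂ × ℂ)) := by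
        intro x hx y hy hxy
        have hx' := (Finset.mem_filter.1 hx).2
        have hy' := (Finset.mem_filter.1 hy).2
        exact Prod.ext (hx'.trans hy'.symm) hxy
      calc F.card = (F.image Prod.snd).card := (Finset.card_image_of_injOn hinj).symm
        _ ≤ Pq.roots.toFinset.card := Finset.card_le_card himg
        _ ≤ Multiset.card Pq.roots := Multiset.toFinset_card_le _
        _ ≤ Pq.natDegree := Polynomial.card_roots' Pq
        _ = 2 := hPqd
    by_cases hc : F.card ≤ 1
    · refine hc.trans ?_
      have := (Polynomial.rootMultiplicity_pos hS).2 (himroot s hs)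
      omega
    · push_neg at hc
      obtain ⟨x, hxF, y, hyF, hxy⟩ := Finset.one_lt_card.1 hc
      have hxs := (Finset.mem_filter.1 hxF).2
      have hys := (Finset.mem_filter.1 hyF).2
      have hxT := (Finset.mem_filter.1 hxF).1
      have hyT := (Finset.mem_filter.1 hyF).1
      have hsnd : x.2 ≠ y.2 := by
        intro hss; exact hxy (Prod.ext (hxs.trans hys.symm) hss)
      have hlx := hlin x hxT; have hly := hlin y hyT
      rw [hxs] at hlx; rw [hys] at hly
      have hu1 : u1.eval s = 0 := by
        have hd : u1.eval s * (x.2 - y.2) = 0 := by linear_combination hlx - hly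
        rcases mul_eq_zero.1 hd with h' | h'
        · exact h'
        · exact absurd (sub_eq_zero.1 h') hsnd
      have hu0 : u0.eval s = 0 := by linear_combination hlx - x.2 * hu1
      have hdvd : (Polynomial.X - Polynomial.C s) ^ 2 ∣ S := by
        have d1 : (Polynomial.X - Polynomial.C s) ∣ u1 := Polynomial.dvd_iff_isRoot.2 hu1
        have d0 : (Polynomial.X - Polynomial.C s) ∣ u0 := Polynomial.dvd_iff_isRoot.2 hu0
        rw [hSdef]
        refine dvd_add (dvd_sub ?_ ?_) ?_
        · exact Dvd.dvd.mul_left (by rw [sq, sq]; exact mul_dvd_mul d0 d0) g2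
        · exact Dvd.dvd.mul_left (by rw [sq]; exact mul_dvd_mul d0 d1) g1
        · exact Dvd.dvd.mul_left (by rw [sq, sq]; exact mul_dvd_mul d1 d1) g0
      have := (Polynomial.le_rootMultiplicity_iff hS).2 hdvd
      omega
  calc ∑ s ∈ T.image Prod.fst, (T.filter fun x => x.1 = s).card
      ≤ ∑ s ∈ T.image Prod.fst, Polynomial.rootMultiplicity s S :=
        Finset.sum_le_sum hfib
    _ = ∑ s ∈ T.image Prod.fst, S.roots.count s := by
        refine Finset.sum_congr rfl fun s _ => ?_
        rw [Polynomial.count_roots]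
    _ ≤ ∑ s ∈ S.roots.toFinset, S.roots.count s := by
        refine Finset.sum_le_sum_of_subset ?_
        intro s hs
        rw [Multiset.mem_toFinset]
        rw [Polynomial.mem_roots hS]
        exact himroot s hs
    _ = Multiset.card S.roots := Multiset.toFinset_sum_count_eq _
    _ ≤ S.natDegree := Polynomial.card_roots' S

lemma ndPc1 : (Pc1 q h).natDegree ≤ 2 := by unfold Pc1; compute_degree
lemma ndPc0 : (Pc0 q h).natDegree ≤ 4 := by unfold Pc0; compute_degree
lemma ndPg2 : (Pg2 q h).natDegree ≤ 1 := by unfold Pg2; compute_degree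
lemma ndPg1 : (Pg1 q h).natDegree ≤ 3 := by unfold Pg1; compute_degree
lemma ndPg0 : (Pg0 q h).natDegree ≤ 5 := by unfold Pg0; compute_degree
lemma ndPe2 : (Pe2 q h).natDegree ≤ 2 := by unfold Pe2; compute_degree
lemma ndPe1 : (Pe1 q h).natDegree ≤ 4 := by unfold Pe1; compute_degree
lemma ndPe0 : (Pe0 q h).natDegree ≤ 6 := by unfold Pe0; compute_degree

lemma ndPr1 : (Pr1 q h).natDegree ≤ 6 := by
  unfold Pr1
  refine (Polynomial.natDegree_sub_le _ _).trans (max_le ((Polynomial.natDegree_sub_le _ _).trans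
    (max_le ((ndPe1 q h).trans (by norm_num)) ?_)) ?_)
  · exact (Polynomial.natDegree_mul_le).trans (by
      have := ndPc0 q h; have : (Polynomial.C (h 3 0 1)).natDegree = 0 := Polynomial.natDegree_C _
      omega)
  · refine (Polynomial.natDegree_mul_le).trans ?_
    have h1 : (Pe2 q h - Polynomial.C (h 3 0 1) * Pc1 q h).natDegree ≤ 2 := by
      refine (Polynomial.natDegree_sub_le _ _).trans (max_le (ndPe2 q h) ?_)
      refine (Polynomial.natDegree_mul_le).trans ?_
      have := ndPc1 q h
      have h0 : (Polynomial.C (h 3 0 1)).natDegree = 0 := Polynomial.natDegree_C _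
      omega
    have := ndPc1 q h
    omega

lemma ndPr0 : (Pr0 q h).natDegree ≤ 6 := by
  unfold Pr0
  refine (Polynomial.natDegree_sub_le _ _).trans (max_le (ndPe0 q h) ?_)
  refine (Polynomial.natDegree_mul_le).trans ?_
  have h1 : (Pe2 q h - Polynomial.C (h 3 0 1) * Pc1 q h).natDegree ≤ 2 := by
    refine (Polynomial.natDegree_sub_le _ _).trans (max_le (ndPe2 q h) ?_)
    refine (Polynomial.natDegree_mul_le).trans ?_
    have := ndPc1 q h
    have h0 : (Polynomial.C (h 3 0 1)).natDegree = 0 := Polynomial.natDegree_C _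
    omega
  have := ndPc0 q h
  omega

lemma ndPs1 : (Ps1 q h).natDegree ≤ 3 := by
  unfold Ps1
  refine (Polynomial.natDegree_sub_le _ _).trans (max_le (ndPg1 q h) ?_)
  refine (Polynomial.natDegree_mul_le).trans ?_
  have := ndPg2 q h; have := ndPc1 q h; omega

lemma ndPs0 : (Ps0 q h).natDegree ≤ 5 := by
  unfold Ps0
  refine (Polynomial.natDegree_sub_le _ _).trans (max_le (ndPg0 q h) ?_)
  refine (Polynomial.natDegree_mul_le).trans ?_
  have := ndPg2 q h; have := ndPc0 q h; omega

lemma ndS_gen (g2 g1 g0 u1 u0 : Polynomial ℂ) (b2 b1 b0 c1 c0 : ℕ)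
    (h2 : g2.natDegree ≤ b2) (h1 : g1.natDegree ≤ b1) (h0 : g0.natDegree ≤ b0)
    (hu1 : u1.natDegree ≤ c1) (hu0 : u0.natDegree ≤ c0) :
    (g2 * u0 ^ 2 - g1 * (u0 * u1) + g0 * u1 ^ 2).natDegree
      ≤ max (b2 + 2 * c0) (max (b1 + (c0 + c1)) (b0 + 2 * c1)) := by
  refine (Polynomial.natDegree_add_le _ _).trans (max_le ((Polynomial.natDegree_sub_le _ _).trans
    (max_le ?_ ?_)) ?_)
  · refine le_max_of_le_left ?_
    refine (Polynomial.natDegree_mul_le).trans ?_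
    have := Polynomial.natDegree_pow_le (p := u0) (n := 2)
    have := Polynomial.natDegree_mul_le (p := u0) (q := u0)
    omega
  · refine le_max_of_le_right (le_max_of_le_left ?_)
    refine (Polynomial.natDegree_mul_le).trans ?_
    have := Polynomial.natDegree_mul_le (p := u0) (q := u1)
    omega
  · refine le_max_of_le_right (le_max_of_le_right ?_)
    refine (Polynomial.natDegree_mul_le).trans ?_
    have := Polynomial.natDegree_pow_le (p := u1) (n := 2)
    omega

lemma ndPR : (PR q h).natDegree ≤ 26 := by
  unfold PR
  refine (ndS_gen 1 (Pc1 q h) (Pc0 q h) (Pr1 q h) (Pr0 q h) 0 2 4 6 6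
    (by simp) (ndPc1 q h) (ndPc0 q h) (ndPr1 q h) (ndPr0 q h)).trans (by norm_num)

lemma ndPW : (PW q h).natDegree ≤ 26 := by
  unfold PW
  refine (ndS_gen (Pg2 q h) (Pg1 q h) (Pg0 q h) (Pr1 q h) (Pr0 q h) 1 3 5 6 6
    (ndPg2 q h) (ndPg1 q h) (ndPg0 q h) (ndPr1 q h) (ndPr0 q h)).trans (by norm_num)

lemma ndPRp : (PRp q h).natDegree ≤ 26 := by
  unfold PRp
  refine (ndS_gen 1 (Pc1 q h) (Pc0 q h) (Ps1 q h) (Ps0 q h) 0 2 4 3 5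
    (by simp) (ndPc1 q h) (ndPc0 q h) (ndPs1 q h) (ndPs0 q h)).trans (by norm_num)

lemma pvec_ne (s : ℂ) : pvec h s ≠ 0 := by
  intro h0
  have := congrFun h0 1
  simp [pvec] at this

lemma uvec_ne (a d : ℂ) : uvec a d ≠ 0 := by
  intro h0
  have := congrFun h0 2
  simp [uvec] at this

variable (f : MvPolynomial (Fin 4) ℂ)

lemma smul_eval (hf : f = X 3 ^ 2 * X 2 ^ 2 + X 3 * (X 1 ^ 3 + X 2 * quadForm q) + quartForm h)
    (h400 : h 4 0 0 = 0) (h310 : h 3 1 0 = 0) (q20 : q 2 0 = 0) (h220 : h 2 2 0 = 1)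
    (c : ℂ) (v : Fin 4 → ℂ) : eval (c • v) f = c ^ 4 * eval v f := by
  rw [eval_f q h f hf h400 h310 q20 h220, eval_f q h f hf h400 h310 q20 h220]
  simp only [Pi.smul_apply, smul_eq_mul]
  ring

lemma mem_zeroSet_mk (hf : f = X 3 ^ 2 * X 2 ^ 2 + X 3 * (X 1 ^ 3 + X 2 * quadForm q) + quartForm h)
    (h400 : h 4 0 0 = 0) (h310 : h 3 1 0 = 0) (q20 : q 2 0 = 0) (h220 : h 2 2 0 = 1)
    (v : Fin 4 → ℂ) (hv : v ≠ 0) :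
    Projectivization.mk ℂ v hv ∈ zeroSet f ↔ eval v f = 0 := by
  obtain ⟨c, hc⟩ := (Projectivization.mk_eq_mk_iff' ℂ _ _
    (Projectivization.rep_nonzero (Projectivization.mk ℂ v hv)) hv).1
    (Projectivization.mk_rep (Projectivization.mk ℂ v hv))
  have hcne : c ≠ 0 := by
    intro h0
    rw [h0, zero_smul] at hc
    exact Projectivization.rep_nonzero _ hc.symm
  unfold zeroSet
  simp only [Set.mem_setOf_eq]
  rw [← hc, smul_eval q h f hf h400 h310 q20 h220]
  constructor
  · intro h0
    rcases mul_eq_zero.1 h0 with h' | h'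
    · exact absurd h' (pow_ne_zero _ hcne)
    · exact h'
  · intro h0; rw [h0, mul_zero]

lemma mem_line_mk (W : Submodule ℂ (Fin 4 → ℂ)) (v : Fin 4 → ℂ) (hv : v ≠ 0) :
    Projectivization.mk ℂ v hv ∈ {P : P3 | P.submodule ≤ W} ↔ v ∈ W := by
  simp only [Set.mem_setOf_eq, Projectivization.submodule_mk]
  exact Submodule.span_singleton_le_iff_mem v W

lemma rep_mem (P : P3) : P.rep ∈ P.submodule := by
  rw [Projectivization.submodule_eq]
  exact Submodule.mem_span_singleton_self _

lemma indep_pu (s a d : ℂ) : LinearIndependent ℂ ![pvec h s, uvec a d] := by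
  rw [LinearIndependent.pair_iff]
  intro m n hmn
  have h1 := congrFun hmn 1
  have h2 := congrFun hmn 2
  simp [pvec, uvec] at h1 h2
  exact ⟨h1, h2⟩

lemma finrank_span_pu (s a d : ℂ) :
    Module.finrank ℂ (Submodule.span ℂ {pvec h s, uvec a d}) = 2 := by
  have hr : Set.range ![pvec h s, uvec a d] = {pvec h s, uvec a d} := by
    simp [Matrix.range_cons, Matrix.range_empty]
    exact Set.pair_comm _ _
  have := finrank_span_eq_card (R := ℂ) (b := ![pvec h s, uvec a d]) (indep_pu h s a d)
  rw [hr] at this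
  simpa using this

def WL (q : ℕ → ℕ → ℂ) (h : ℕ → ℕ → ℕ → ℂ) (s a : ℂ) : Submodule ℂ (Fin 4 → ℂ) :=
  Submodule.span ℂ {pvec h s, uvec a (dlt q h s a)}

def lineF (q : ℕ → ℕ → ℂ) (h : ℕ → ℕ → ℕ → ℂ) (s a : ℂ) : Set P3 :=
  {P : P3 | P.submodule ≤ WL q h s a}

lemma lineF_isLine (s a : ℂ) : IsLine (lineF q h s a) :=
  ⟨WL q h s a, finrank_span_pu h s a _, rfl⟩

lemma E1_dlt (s a : ℂ) : E1 q h s a (dlt q h s a) = 0 := by rw [E1_eq]; ring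

lemma lineF_sub (hf : f = X 3 ^ 2 * X 2 ^ 2 + X 3 * (X 1 ^ 3 + X 2 * quadForm q) + quartForm h)
    (h400 : h 4 0 0 = 0) (h310 : h 3 1 0 = 0) (q20 : q 2 0 = 0) (h220 : h 2 2 0 = 1)
    (s a : ℂ)
    (hE2 : E2 q h s a (dlt q h s a) = 0) (hE3 : E3 q h s a (dlt q h s a) = 0)
    (hE4 : E4 q h s a (dlt q h s a) = 0) :
    lineF q h s a ⊆ zeroSet f := by
  intro P hP
  have hrep : P.rep ∈ WL q h s a := hP (rep_mem P)
  obtain ⟨m, n, hmn⟩ := Submodule.mem_span_pair.1 hrep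
  show eval P.rep f = 0
  rw [← hmn, master q h f hf h400 h310 q20 h220, E1_dlt, hE2, hE3, hE4]
  ring

lemma pvec_mem_WL (s a : ℂ) : pvec h s ∈ WL q h s a :=
  Submodule.subset_span (by simp)

lemma uvec_mem_WL (s a : ℂ) : uvec a (dlt q h s a) ∈ WL q h s a :=
  Submodule.subset_span (by simp)

lemma lineF_inj (s a s' a' : ℂ) (heq : lineF q h s a = lineF q h s' a') :
    s = s' ∧ a = a' := by
  have hp : pvec h s ∈ WL q h s' a' := by
    have h1 : Projectivization.mk ℂ (pvec h s) (pvec_ne h s) ∈ lineF q h s a :=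
      (mem_line_mk _ _ _).2 (pvec_mem_WL q h s a)
    rw [heq] at h1
    exact (mem_line_mk _ _ _).1 h1
  have hu : uvec a (dlt q h s a) ∈ WL q h s' a' := by
    have h1 : Projectivization.mk ℂ (uvec a (dlt q h s a)) (uvec_ne a _) ∈ lineF q h s a :=
      (mem_line_mk _ _ _).2 (uvec_mem_WL q h s a)
    rw [heq] at h1
    exact (mem_line_mk _ _ _).1 h1
  obtain ⟨m, n, hmn⟩ := Submodule.mem_span_pair.1 hp
  obtain ⟨m', n', hmn'⟩ := Submodule.mem_span_pair.1 hu
  have c1 := congrFun hmn 1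
  have c2 := congrFun hmn 2
  have c0 := congrFun hmn 0
  simp [pvec, uvec] at c1 c2 c0
  have c1' := congrFun hmn' 1
  have c2' := congrFun hmn' 2
  have c0' := congrFun hmn' 0
  simp [pvec, uvec] at c1' c2' c0'
  subst c1 c2
  constructor
  · exact (show s' = s by simpa using c0).symm
  · rw [c1', c2'] at c0'
    exact (show a' = a by simpa using c0').symm

def e0v : Fin 4 → ℂ := ![1, 0, 0, 0]
def e3v : Fin 4 → ℂ := ![0, 0, 0, 1]

def W0 : Submodule ℂ (Fin 4 → ℂ) := Submodule.span ℂ {e0v, e3v}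

def lineO : Set P3 := {P : P3 | P.submodule ≤ W0}

lemma indep_e03 : LinearIndependent ℂ ![e0v, e3v] := by
  rw [LinearIndependent.pair_iff]
  intro m n hmn
  have h1 := congrFun hmn 0
  have h2 := congrFun hmn 3
  simp [e0v, e3v] at h1 h2
  exact ⟨h1, h2⟩

lemma finrank_W0 : Module.finrank ℂ W0 = 2 := by
  have hr : Set.range ![e0v, e3v] = {e0v, e3v} := by
    simp [Matrix.range_cons, Matrix.range_empty]
    exact Set.pair_comm _ _
  have := finrank_span_eq_card (R := ℂ) (b := ![e0v, e3v]) indep_e03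
  rw [hr] at this
  show Module.finrank ℂ (Submodule.span ℂ {e0v, e3v}) = 2
  simpa using this

lemma throughO (hf : f = X 3 ^ 2 * X 2 ^ 2 + X 3 * (X 1 ^ 3 + X 2 * quadForm q) + quartForm h)
    (h400 : h 4 0 0 = 0) (h310 : h 3 1 0 = 0) (q20 : q 2 0 = 0) (h220 : h 2 2 0 = 1)
    (W : Submodule ℂ (Fin 4 → ℂ)) (hrk : Module.finrank ℂ W = 2)
    (hsub : {P : P3 | P.submodule ≤ W} ⊆ zeroSet f)
    (he3 : e3v ∈ W) : W = W0 := by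
  have hle : W ≤ W0 := by
    intro v hv
    by_cases hv12 : v 1 = 0 ∧ v 2 = 0
    · refine Submodule.mem_span_pair.2 ⟨v 0, v 3, ?_⟩
      funext i
      fin_cases i <;> simp [e0v, e3v, hv12.1, hv12.2]
    · exfalso
      have hvne : ∀ t : ℂ, v + t • e3v ≠ 0 := by
        intro t h0
        have h1 := congrFun h0 1
        have h2 := congrFun h0 2
        simp [e3v] at h1 h2
        exact hv12 ⟨h1, h2⟩
      have hev : ∀ t : ℂ, eval (v + t • e3v) f = 0 := by
        intro t
        have hmem : v + t • e3v ∈ W := W.add_mem hv (W.smul_mem _ he3)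
        have := hsub ((mem_line_mk W _ (hvne t)).2 hmem)
        rwa [mem_zeroSet_mk q h f hf h400 h310 q20 h220] at this
      have hev' : ∀ t : ℂ, (v 3 + t) ^ 2 * v 2 ^ 2
          + (v 3 + t) * (v 1 ^ 3 + v 2 * (q 1 1 * (v 0 * v 1) + q 0 2 * v 1 ^ 2))
          + (h 3 0 1 * (v 0 ^ 3 * v 2) + h 2 1 1 * (v 0 ^ 2 * v 1 * v 2)
            + h 2 0 2 * (v 0 ^ 2 * v 2 ^ 2)
            + v 0 ^ 2 * v 1 ^ 2 + h 1 3 0 * (v 0 * v 1 ^ 3) + h 1 2 1 * (v 0 * v 1 ^ 2 * v 2)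
            + h 1 1 2 * (v 0 * v 1 * v 2 ^ 2) + h 1 0 3 * (v 0 * v 2 ^ 3) + h 0 4 0 * v 1 ^ 4
            + h 0 3 1 * (v 1 ^ 3 * v 2) + h 0 2 2 * (v 1 ^ 2 * v 2 ^ 2)
            + h 0 1 3 * (v 1 * v 2 ^ 3) + h 0 0 4 * v 2 ^ 4) = 0 := by
        intro t
        have h5 := hev t
        rw [eval_f q h f hf h400 h310 q20 h220] at h5
        simp only [Pi.add_apply, Pi.smul_apply, smul_eq_mul, e3v, Matrix.cons_val_zero,
          Matrix.cons_val_one, Matrix.head_cons, Matrix.cons_val_two, Matrix.tail_cons,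
          Matrix.cons_val_three] at h5
        linear_combination h5
      have h0 := hev' 0
      have h1 := hev' 1
      have h2 := hev' 2
      have hA : v 2 ^ 2 = 0 := by linear_combination (h0 - 2 * h1 + h2) / 2
      have hv2 : v 2 = 0 := pow_eq_zero_iff two_ne_zero |>.1 hA
      have hB : v 1 ^ 3 = 0 := by
        linear_combination (-3 * h0 + 4 * h1 - h2) / 2
          - (2 * v 3 * v 2 + (q 1 1 * (v 0 * v 1) + q 0 2 * v 1 ^ 2)) * hv2
      exact hv12 ⟨pow_eq_zero_iff three_ne_zero |>.1 hB, hv2⟩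
  exact Submodule.eq_of_le_of_finrank_eq hle (by rw [hrk, finrank_W0])

lemma exists_v2 (hf : f = X 3 ^ 2 * X 2 ^ 2 + X 3 * (X 1 ^ 3 + X 2 * quadForm q) + quartForm h)
    (h400 : h 4 0 0 = 0) (h310 : h 3 1 0 = 0) (q20 : q 2 0 = 0) (h220 : h 2 2 0 = 1)
    (W : Submodule ℂ (Fin 4 → ℂ)) (hrk : Module.finrank ℂ W = 2)
    (hsub : {P : P3 | P.submodule ≤ W} ⊆ zeroSet f)
    (s : ℂ) (hp : pvec h s ∈ W) :
    ∃ v ∈ W, v 2 ≠ 0 := by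
  by_contra hcon
  push_neg at hcon
  have hnle : ¬ W ≤ Submodule.span ℂ {pvec h s} := by
    intro hle
    have h1 := Submodule.finrank_mono hle
    rw [hrk, finrank_span_singleton (pvec_ne h s)] at h1
    omega
  obtain ⟨v, hvW, hvn⟩ := SetLike.not_le_iff_exists.1 hnle
  set k : Fin 4 → ℂ := v - v 1 • pvec h s with hk
  have hkW : k ∈ W := W.sub_mem hvW (W.smul_mem _ hp)
  have hp1 : pvec h s 1 = 1 := by simp [pvec]
  have hp2 : pvec h s 2 = 0 := by simp [pvec]
  have hk1 : k 1 = 0 := by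
    rw [hk]; simp only [Pi.sub_apply, Pi.smul_apply, smul_eq_mul, hp1]; ring
  have hk2 : k 2 = 0 := by
    rw [hk]; simp only [Pi.sub_apply, Pi.smul_apply, smul_eq_mul, hp2]
    rw [hcon v hvW]; ring
  have hkne : k ≠ 0 := by
    intro h0
    apply hvn
    rw [Submodule.mem_span_singleton]
    exact ⟨v 1, (sub_eq_zero.1 h0).symm⟩
  have hvals : ∀ t : ℂ, eval (pvec h s + t • k) f = 0 := by
    intro t
    have hne : pvec h s + t • k ≠ 0 := by
      intro h0
      have := congrFun h0 1
      simp [pvec, hk1] at this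
    have hmem : pvec h s + t • k ∈ W := W.add_mem hp (W.smul_mem _ hkW)
    have := hsub ((mem_line_mk W _ hne).2 hmem)
    rwa [mem_zeroSet_mk q h f hf h400 h310 q20 h220] at this
  have hev' : ∀ t : ℂ, (k 0) ^ 2 * t ^ 2 + (k 3 + 2 * s * k 0 + h 1 3 0 * k 0) * t = 0 := by
    intro t
    have h5 := hvals t
    rw [eval_f q h f hf h400 h310 q20 h220] at h5
    simp only [Pi.add_apply, Pi.smul_apply, smul_eq_mul, pvec, Matrix.cons_val_zero,
      Matrix.cons_val_one, Matrix.head_cons, Matrix.cons_val_two, Matrix.tail_cons,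
      Matrix.cons_val_three, hk1, hk2] at h5
    linear_combination h5
  have h1 := hev' 1
  have h2 := hev' 2
  have hA : (k 0) ^ 2 = 0 := by linear_combination (h2 - 2 * h1) / 2
  have hk0 : k 0 = 0 := pow_eq_zero_iff two_ne_zero |>.1 hA
  have hk3 : k 3 = 0 := by
    linear_combination h1 - hA - (2 * s + h 1 3 0) * hk0
  apply hkne
  funext i
  fin_cases i
  exacts [hk0, hk1, hk2, hk3]

lemma con_char (P : P3) (hz : P.rep 2 = 0)
    (hq : P.rep 0 ^ 2 + h 1 3 0 * P.rep 0 * P.rep 1 + h 0 4 0 * P.rep 1 ^ 2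
      + P.rep 1 * P.rep 3 = 0) :
    P = ptO ∨ ∃ s, P = Projectivization.mk ℂ (pvec h s) (pvec_ne h s) := by
  by_cases h1 : P.rep 1 = 0
  · left
    have h0 : P.rep 0 = 0 := by
      have hsq : P.rep 0 ^ 2 = 0 := by
        linear_combination hq - (h 1 3 0 * P.rep 0 + h 0 4 0 * P.rep 1 + P.rep 3) * h1
      exact pow_eq_zero_iff two_ne_zero |>.1 hsq
    rw [← Projectivization.mk_rep P]
    unfold ptO
    rw [Projectivization.mk_eq_mk_iff']
    refine ⟨P.rep 3, ?_⟩
    funext i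
    fin_cases i <;> simp [h0, h1, hz]
  · right
    set u := P.rep 0 with hu
    set v := P.rep 1 with hv
    set s : ℂ := u / v with hs
    have hAv : v * v⁻¹ = 1 := mul_inv_cancel₀ h1
    have hvec : v • pvec h s = P.rep := by
      funext i
      fin_cases i
      · show v * s = P.rep 0
        rw [hs]; field_simp
        exact hu
      · show v * 1 = P.rep 1
        rw [mul_one, hv]
      · show v * 0 = P.rep 2
        rw [mul_zero]; exact hz.symm
      · show v * -(s ^ 2 + h 1 3 0 * s + h 0 4 0) = P.rep 3
        rw [hs, div_eq_mul_inv]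
        linear_combination (-(v)⁻¹) * hq
          - (u ^ 2 * v⁻¹ - h 0 4 0 * v - P.rep 3
            - h 1 3 0 * u - u ^ 2 * v⁻¹ * (v * v⁻¹)) * hAv
          - (u * h 1 3 0 + v * u ^ 2 * v⁻¹ ^ 2) * hAv
    refine ⟨s, ?_⟩
    rw [← Projectivization.mk_rep P, Projectivization.mk_eq_mk_iff']
    exact ⟨v, hvec⟩

lemma classify (hf : f = X 3 ^ 2 * X 2 ^ 2 + X 3 * (X 1 ^ 3 + X 2 * quadForm q) + quartForm h)
    (h400 : h 4 0 0 = 0) (h310 : h 3 1 0 = 0) (q20 : q 2 0 = 0) (h220 : h 2 2 0 = 1)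
    (W : Submodule ℂ (Fin 4 → ℂ)) (hrk : Module.finrank ℂ W = 2)
    (hsub : {P : P3 | P.submodule ≤ W} ⊆ zeroSet f)
    (P0 : P3) (hP0 : P0.submodule ≤ W)
    (hP0C : P0 = ptO ∨ ∃ s, P0 = Projectivization.mk ℂ (pvec h s) (pvec_ne h s)) :
    W = W0 ∨ ∃ s a, (E2 q h s a (dlt q h s a) = 0 ∧ E3 q h s a (dlt q h s a) = 0
      ∧ E4 q h s a (dlt q h s a) = 0) ∧ W = WL q h s a := by
  rcases hP0C with rfl | ⟨s, rfl⟩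
  · left
    have he3 : e3v ∈ W := (mem_line_mk W _ (by
      intro h0
      simpa [e3v] using congrFun h0 3)).1 hP0
    exact throughO q h f hf h400 h310 q20 h220 W hrk hsub he3
  · right
    have hp : pvec h s ∈ W := (mem_line_mk W _ (pvec_ne h s)).1 hP0
    obtain ⟨v, hvW, hv2⟩ := exists_v2 q h f hf h400 h310 q20 h220 W hrk hsub s hp
    set w1 : Fin 4 → ℂ := (v 2)⁻¹ • v - ((v 2)⁻¹ * v 1) • pvec h s with hw1
    have hw1W : w1 ∈ W := W.sub_mem (W.smul_mem _ hvW) (W.smul_mem _ hp)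
    set a := w1 0 with ha
    set d := w1 3 with hd
    have hp1 : pvec h s 1 = 1 := by simp [pvec]
    have hp2 : pvec h s 2 = 0 := by simp [pvec]
    have hw1eq : w1 = uvec a d := by
      funext i
      fin_cases i
      · show w1 0 = a
        rw [ha]
      · show w1 1 = 0
        rw [hw1]
        simp only [Pi.sub_apply, Pi.smul_apply, smul_eq_mul, hp1]
        ring
      · show w1 2 = 1
        rw [hw1]
        simp only [Pi.sub_apply, Pi.smul_apply, smul_eq_mul, hp2]
        rw [mul_zero, sub_zero]
        exact inv_mul_cancel₀ hv2
      · show w1 3 = d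
        rw [hd]
    have hle : Submodule.span ℂ {pvec h s, uvec a d} ≤ W := by
      rw [Submodule.span_le, Set.insert_subset_iff, Set.singleton_subset_iff]
      exact ⟨hp, hw1eq ▸ hw1W⟩
    have hWeq : Submodule.span ℂ {pvec h s, uvec a d} = W :=
      Submodule.eq_of_le_of_finrank_eq hle (by rw [hrk, finrank_span_pu])
    have hev : ∀ be : ℂ, E1 q h s a d * be + E2 q h s a d * be ^ 2 + E3 q h s a d * be ^ 3
        + E4 q h s a d * be ^ 4 = 0 := by
      intro be
      have hne : pvec h s + be • uvec a d ≠ 0 := by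
        intro h0
        have := congrFun h0 1
        simp [pvec, uvec] at this
      have hmem : pvec h s + be • uvec a d ∈ W :=
        W.add_mem hp (W.smul_mem _ (hw1eq ▸ hw1W))
      have h5 := (mem_zeroSet_mk q h f hf h400 h310 q20 h220 _ hne).1
        (hsub ((mem_line_mk W _ hne).2 hmem))
      have h6 : eval ((1 : ℂ) • pvec h s + be • uvec a d) f = 0 := by rwa [one_smul]
      rw [master q h f hf h400 h310 q20 h220] at h6
      linear_combination h6
    have e1 := hev 1
    have e2 := hev 2
    have e3 := hev 3
    have e4 := hev 4
    have hE1 : E1 q h s a d = 0 := by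
      linear_combination 4 * e1 - 3 * e2 + (4/3) * e3 - (1/4) * e4
    have hE2 : E2 q h s a d = 0 := by
      linear_combination (-13/3) * e1 + (19/4) * e2 - (7/3) * e3 + (11/24) * e4
    have hE3 : E3 q h s a d = 0 := by
      linear_combination (3/2) * e1 - 2 * e2 + (7/6) * e3 - (1/4) * e4
    have hE4 : E4 q h s a d = 0 := by
      linear_combination (-1/6) * e1 + (1/4) * e2 - (1/6) * e3 + (1/24) * e4
    have hdd : d = dlt q h s a := by
      have h7 := hE1
      rw [E1_eq] at h7
      linear_combination h7
    rw [hdd] at hE2 hE3 hE4 hWeq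
    exact ⟨s, a, ⟨hE2, hE3, hE4⟩, hWeq.symm⟩

lemma solR (s : ℂ) (hR : PR q h = 0) (hWp : PW q h = 0) (hr1 : (Pr1 q h).eval s ≠ 0) :
    E2 q h s (-(Pr0 q h).eval s / (Pr1 q h).eval s)
        (dlt q h s (-(Pr0 q h).eval s / (Pr1 q h).eval s)) = 0
    ∧ E3 q h s (-(Pr0 q h).eval s / (Pr1 q h).eval s)
        (dlt q h s (-(Pr0 q h).eval s / (Pr1 q h).eval s)) = 0
    ∧ E4 q h s (-(Pr0 q h).eval s / (Pr1 q h).eval s)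
        (dlt q h s (-(Pr0 q h).eval s / (Pr1 q h).eval s)) = 0 := by
  set a : ℂ := -(Pr0 q h).eval s / (Pr1 q h).eval s with haa
  have hlin : (Pr1 q h).eval s * a + (Pr0 q h).eval s = 0 := by
    rw [haa]
    field_simp
    ring
  have hPR0 : ((Pr0 q h).eval s) ^ 2 - (Pc1 q h).eval s * ((Pr0 q h).eval s * (Pr1 q h).eval s)
      + (Pc0 q h).eval s * ((Pr1 q h).eval s) ^ 2 = 0 := by
    have := congrArg (Polynomial.eval s) hR
    simpa [PR] using this
  have hquad : a ^ 2 + (Pc1 q h).eval s * a + (Pc0 q h).eval s = 0 := by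
    have hkey : (a ^ 2 + (Pc1 q h).eval s * a + (Pc0 q h).eval s) * ((Pr1 q h).eval s) ^ 2
        = 0 := by
      linear_combination hPR0 + ((Pr1 q h).eval s * a - (Pr0 q h).eval s
        + (Pc1 q h).eval s * (Pr1 q h).eval s) * hlin
    rcases mul_eq_zero.1 hkey with h' | h'
    · exact h'
    · exact absurd (pow_eq_zero_iff two_ne_zero |>.1 h') hr1
  have hPW0 : (Pg2 q h).eval s * ((Pr0 q h).eval s) ^ 2
      - (Pg1 q h).eval s * ((Pr0 q h).eval s * (Pr1 q h).eval s)
      + (Pg0 q h).eval s * ((Pr1 q h).eval s) ^ 2 = 0 := by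
    have := congrArg (Polynomial.eval s) hWp
    simpa [PW] using this
  have hgquad : (Pg2 q h).eval s * a ^ 2 + (Pg1 q h).eval s * a + (Pg0 q h).eval s = 0 := by
    have hkey : ((Pg2 q h).eval s * a ^ 2 + (Pg1 q h).eval s * a + (Pg0 q h).eval s)
        * ((Pr1 q h).eval s) ^ 2 = 0 := by
      linear_combination hPW0 + ((Pg2 q h).eval s * ((Pr1 q h).eval s * a - (Pr0 q h).eval s)
        + (Pg1 q h).eval s * (Pr1 q h).eval s) * hlin
    rcases mul_eq_zero.1 hkey with h' | h'
    · exact h'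
    · exact absurd (pow_eq_zero_iff two_ne_zero |>.1 h') hr1
  refine ⟨?_, ?_, ?_⟩
  · rw [keyE2]; exact hquad
  · rw [keyE3]; exact hgquad
  · rw [keyE4]
    linear_combination (h 3 0 1 * a + ((Pe2 q h).eval s - h 3 0 1 * (Pc1 q h).eval s)) * hquad
      + hlin

lemma solRp (s : ℂ) (hr1 : Pr1 q h = 0) (hr0 : Pr0 q h = 0) (hRp : PRp q h = 0)
    (hs1 : (Ps1 q h).eval s ≠ 0) :
    E2 q h s (-(Ps0 q h).eval s / (Ps1 q h).eval s)
        (dlt q h s (-(Ps0 q h).eval s / (Ps1 q h).eval s)) = 0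
    ∧ E3 q h s (-(Ps0 q h).eval s / (Ps1 q h).eval s)
        (dlt q h s (-(Ps0 q h).eval s / (Ps1 q h).eval s)) = 0
    ∧ E4 q h s (-(Ps0 q h).eval s / (Ps1 q h).eval s)
        (dlt q h s (-(Ps0 q h).eval s / (Ps1 q h).eval s)) = 0 := by
  set a : ℂ := -(Ps0 q h).eval s / (Ps1 q h).eval s with haa
  have hlin : (Ps1 q h).eval s * a + (Ps0 q h).eval s = 0 := by
    rw [haa]; field_simp
    ring
  have hPRp0 : ((Ps0 q h).eval s) ^ 2 - (Pc1 q h).eval s * ((Ps0 q h).eval s * (Ps1 q h).eval s)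
      + (Pc0 q h).eval s * ((Ps1 q h).eval s) ^ 2 = 0 := by
    have := congrArg (Polynomial.eval s) hRp
    simpa [PRp] using this
  have hquad : a ^ 2 + (Pc1 q h).eval s * a + (Pc0 q h).eval s = 0 := by
    have hkey : (a ^ 2 + (Pc1 q h).eval s * a + (Pc0 q h).eval s) * ((Ps1 q h).eval s) ^ 2
        = 0 := by
      linear_combination hPRp0 + ((Ps1 q h).eval s * a - (Ps0 q h).eval s
        + (Pc1 q h).eval s * (Ps1 q h).eval s) * hlin
    rcases mul_eq_zero.1 hkey with h' | h'
    · exact h'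
    · exact absurd (pow_eq_zero_iff two_ne_zero |>.1 h') hs1
  have hr1e : (Pr1 q h).eval s = 0 := by rw [hr1]; simp
  have hr0e : (Pr0 q h).eval s = 0 := by rw [hr0]; simp
  refine ⟨?_, ?_, ?_⟩
  · rw [keyE2]; exact hquad
  · rw [keyE3]
    have := keyS q h s a
    linear_combination (-1 : ℂ) * this + (Pg2 q h).eval s * hquad + hlin
  · rw [keyE4]
    linear_combination (h 3 0 1 * a + ((Pe2 q h).eval s - h 3 0 1 * (Pc1 q h).eval s)) * hquad
      + a * hr1e + hr0e

lemma solQuad (s : ℂ) (hr1 : Pr1 q h = 0) (hr0 : Pr0 q h = 0)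
    (hs1 : Ps1 q h = 0) (hs0 : Ps0 q h = 0) :
    ∃ a, E2 q h s a (dlt q h s a) = 0 ∧ E3 q h s a (dlt q h s a) = 0
      ∧ E4 q h s a (dlt q h s a) = 0 := by
  set Pq : Polynomial ℂ := Polynomial.X ^ 2 + Polynomial.C ((Pc1 q h).eval s) * Polynomial.X
    + Polynomial.C ((Pc0 q h).eval s) with hPq
  have hPqd : Pq.natDegree = 2 := by rw [hPq]; compute_degree!
  have hdeg : Pq.degree ≠ 0 := by
    rw [Polynomial.degree_eq_natDegree (fun h0 => by simp [h0] at hPqd), hPqd]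
    exact (by norm_num)
  obtain ⟨a, ha⟩ := Complex.isAlgClosed.exists_root Pq hdeg
  have hquad : a ^ 2 + (Pc1 q h).eval s * a + (Pc0 q h).eval s = 0 := by
    have := ha
    simp only [Polynomial.IsRoot, hPq, Polynomial.eval_add, Polynomial.eval_pow,
      Polynomial.eval_mul, Polynomial.eval_C, Polynomial.eval_X] at this
    linear_combination this
  have hr1e : (Pr1 q h).eval s = 0 := by rw [hr1]; simp
  have hr0e : (Pr0 q h).eval s = 0 := by rw [hr0]; simp
  have hs1e : (Ps1 q h).eval s = 0 := by rw [hs1]; simp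
  have hs0e : (Ps0 q h).eval s = 0 := by rw [hs0]; simp
  refine ⟨a, ?_, ?_, ?_⟩
  · rw [keyE2]; exact hquad
  · rw [keyE3]
    have := keyS q h s a
    linear_combination (-1 : ℂ) * this + (Pg2 q h).eval s * hquad + a * hs1e + hs0e
  · rw [keyE4]
    linear_combination (h 3 0 1 * a + ((Pe2 q h).eval s - h 3 0 1 * (Pc1 q h).eval s)) * hquad
      + a * hr1e + hr0e

end Q5A

theorem Q5_conic_met_by_at_most_27_lines
    (q : ℕ → ℕ → ℂ) (h : ℕ → ℕ → ℕ → ℂ)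
    (f : MvPolynomial (Fin 4) ℂ)
    (hf : f = X 3 ^ 2 * X 2 ^ 2 + X 3 * (X 1 ^ 3 + X 2 * quadForm q) + quartForm h)
    (h400 : h 4 0 0 = 0) (h310 : h 3 1 0 = 0) (q20 : q 2 0 = 0) (h301 : h 3 0 1 ≠ 0)
    (h220 : h 2 2 0 = 1)
    (hiso : IsIsolatedPtOf ptO {Q : P3 | IsSingPt f Q})
    (hfin : {L : Set P3 | IsLine L ∧ L ⊆ zeroSet f}.Finite)
    (Con : Set P3)
    (hCon : Con = {P : P3 | P.rep 2 = 0 ∧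
      P.rep 0 ^ 2 + h 1 3 0 * P.rep 0 * P.rep 1 + h 0 4 0 * P.rep 1 ^ 2 +
        P.rep 1 * P.rep 3 = 0}) :
    {L : Set P3 | IsLine L ∧ L ⊆ zeroSet f ∧ (L ∩ Con).Nonempty}.ncard ≤ 27 := by
  classical
  set PSet : Set (ℂ × ℂ) := {x | Q5A.E2 q h x.1 x.2 (Q5A.dlt q h x.1 x.2) = 0
    ∧ Q5A.E3 q h x.1 x.2 (Q5A.dlt q h x.1 x.2) = 0
    ∧ Q5A.E4 q h x.1 x.2 (Q5A.dlt q h x.1 x.2) = 0} with hPSet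
  have hcover : {L : Set P3 | IsLine L ∧ L ⊆ zeroSet f ∧ (L ∩ Con).Nonempty}
      ⊆ insert Q5A.lineO ((fun x : ℂ × ℂ => Q5A.lineF q h x.1 x.2) '' PSet) := by
    rintro L ⟨⟨W, hrk, rfl⟩, hsub, P0, hP0L, hP0C⟩
    rw [hCon] at hP0C
    obtain ⟨hz, hq2⟩ := hP0C
    have hchar := Q5A.con_char h P0 hz hq2
    rcases Q5A.classify q h f hf h400 h310 q20 h220 W hrk hsub P0 hP0L hchar with
      hW | ⟨s, a, hsol, hW⟩
    · exact Set.mem_insert_iff.2 (Or.inl (by rw [hW]; rfl))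
    · exact Set.mem_insert_iff.2 (Or.inr ⟨(s, a), hsol, by rw [hW]; rfl⟩)
  have hmonT : ∀ x ∈ PSet, x.2 ^ 2 + (Q5A.Pc1 q h).eval x.1 * x.2
      + (Q5A.Pc0 q h).eval x.1 = 0 := by
    intro x hx
    have h2 := hx.1
    rwa [Q5A.keyE2] at h2
  have hgq : ∀ x ∈ PSet, (Q5A.Pg2 q h).eval x.1 * x.2 ^ 2 + (Q5A.Pg1 q h).eval x.1 * x.2
      + (Q5A.Pg0 q h).eval x.1 = 0 := by
    intro x hx
    have h3 := hx.2.1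
    rwa [Q5A.keyE3] at h3
  have hlin4 : ∀ x ∈ PSet, (Q5A.Pr1 q h).eval x.1 * x.2 + (Q5A.Pr0 q h).eval x.1 = 0 := by
    intro x hx
    have h2 := hx.1
    rw [Q5A.keyE2] at h2
    have h4 := hx.2.2
    rw [Q5A.keyE4] at h4
    linear_combination h4 - (h 3 0 1 * x.2 + ((Q5A.Pe2 q h).eval x.1
      - h 3 0 1 * (Q5A.Pc1 q h).eval x.1)) * h2
  have hlinS : ∀ x ∈ PSet, (Q5A.Ps1 q h).eval x.1 * x.2 + (Q5A.Ps0 q h).eval x.1 = 0 := by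
    intro x hx
    have hk := Q5A.keyS q h x.1 x.2
    have h2 := hmonT x hx
    have h3 := hgq x hx
    linear_combination hk + h3 - (Q5A.Pg2 q h).eval x.1 * h2
  have count_from : (∀ T : Finset (ℂ × ℂ), ↑T ⊆ PSet → T.card ≤ 26) →
      {L : Set P3 | IsLine L ∧ L ⊆ zeroSet f ∧ (L ∩ Con).Nonempty}.ncard ≤ 27 := by
    intro hTb
    have hPSfin : PSet.Finite := by
      by_contra hinf
      obtain ⟨T, hTs, hTc⟩ := Set.Infinite.exists_subset_card_eq hinf 27
      have := hTb T hTs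
      omega
    have hcard : PSet.ncard ≤ 26 := by
      have h1 := hTb hPSfin.toFinset (by simp [Set.Finite.coe_toFinset])
      rwa [← Set.ncard_coe_finset, Set.Finite.coe_toFinset] at h1
    refine le_trans (Set.ncard_le_ncard hcover ((hPSfin.image _).insert _)) ?_
    refine le_trans (Set.ncard_insert_le _ _) ?_
    have himg := Set.ncard_image_le (f := fun x : ℂ × ℂ => Q5A.lineF q h x.1 x.2) hPSfin
    omega
  have contra : ∀ S : Set ℂ, S.Infinite → ∀ asel : ℂ → ℂ,
      (∀ s ∈ S, ((s, asel s) : ℂ × ℂ) ∈ PSet) → False := by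
    intro S hS asel hsol
    have hinj : Set.InjOn (fun s => Q5A.lineF q h s (asel s)) S := by
      intro s hs t ht hst
      exact (Q5A.lineF_inj q h s (asel s) t (asel t) hst).1
    have himg := hS.image hinj
    have hsubl : ((fun s => Q5A.lineF q h s (asel s)) '' S)
        ⊆ {L : Set P3 | IsLine L ∧ L ⊆ zeroSet f} := by
      rintro _ ⟨s, hs, rfl⟩
      obtain ⟨hE2, hE3, hE4⟩ := hsol s hs
      exact ⟨Q5A.lineF_isLine q h _ _,
        Q5A.lineF_sub q h f hf h400 h310 q20 h220 _ _ hE2 hE3 hE4⟩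
    exact himg (hfin.subset hsubl)
  by_cases hR : Q5A.PR q h = 0
  · by_cases hWp : Q5A.PW q h = 0
    · by_cases hRp : Q5A.PRp q h = 0
      · exfalso
        by_cases hr1 : Q5A.Pr1 q h = 0
        · have hr0 : Q5A.Pr0 q h = 0 := by
            have h9 : Q5A.Pr0 q h ^ 2 = 0 := by
              have h8 : Q5A.PR q h = Q5A.Pr0 q h ^ 2 := by rw [Q5A.PR, hr1]; ring
              rw [← h8, hR]
            exact pow_eq_zero_iff two_ne_zero |>.1 h9
          by_cases hs1 : Q5A.Ps1 q h = 0
          · have hs0 : Q5A.Ps0 q h = 0 := by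
              have h9 : Q5A.Ps0 q h ^ 2 = 0 := by
                have h8 : Q5A.PRp q h = Q5A.Ps0 q h ^ 2 := by rw [Q5A.PRp, hs1]; ring
                rw [← h8, hRp]
              exact pow_eq_zero_iff two_ne_zero |>.1 h9
            refine contra Set.univ Set.infinite_univ
              (fun s => (Q5A.solQuad q h s hr1 hr0 hs1 hs0).choose) (fun s _ => ?_)
            exact (Q5A.solQuad q h s hr1 hr0 hs1 hs0).choose_spec
          · have hfin1 : {s : ℂ | (Q5A.Ps1 q h).IsRoot s}.Finite :=
              Polynomial.finite_setOf_isRoot hs1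
            have hinf : {s : ℂ | ¬ (Q5A.Ps1 q h).IsRoot s}.Infinite := by
              have := hfin1.infinite_compl
              rwa [Set.compl_setOf] at this
            exact contra _ hinf
              (fun s => -(Q5A.Ps0 q h).eval s / (Q5A.Ps1 q h).eval s)
              (fun s hs => Q5A.solRp q h s hr1 hr0 hRp hs)
        · have hfin1 : {s : ℂ | (Q5A.Pr1 q h).IsRoot s}.Finite :=
            Polynomial.finite_setOf_isRoot hr1
          have hinf : {s : ℂ | ¬ (Q5A.Pr1 q h).IsRoot s}.Infinite := by
            have := hfin1.infinite_compl
            rwa [Set.compl_setOf] at this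
          exact contra _ hinf
            (fun s => -(Q5A.Pr0 q h).eval s / (Q5A.Pr1 q h).eval s)
            (fun s hs => Q5A.solR q h s hR hWp hs)
      · refine count_from fun T hT => ?_
        refine le_trans (Q5A.core (Q5A.Ps1 q h) (Q5A.Ps0 q h) 1 (Q5A.Pc1 q h) (Q5A.Pc0 q h)
          (Q5A.Pc1 q h) (Q5A.Pc0 q h) (Q5A.PRp q h) rfl hRp T
          (fun x hx => hlinS x (hT hx))
          (fun x hx => by simpa using hmonT x (hT hx))
          (fun x hx => hmonT x (hT hx))) (Q5A.ndPRp q h)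
    · refine count_from fun T hT => ?_
      refine le_trans (Q5A.core (Q5A.Pr1 q h) (Q5A.Pr0 q h) (Q5A.Pg2 q h) (Q5A.Pg1 q h)
        (Q5A.Pg0 q h) (Q5A.Pc1 q h) (Q5A.Pc0 q h) (Q5A.PW q h) rfl hWp T
        (fun x hx => hlin4 x (hT hx))
        (fun x hx => hgq x (hT hx))
        (fun x hx => hmonT x (hT hx))) (Q5A.ndPW q h)
  · refine count_from fun T hT => ?_
    refine le_trans (Q5A.core (Q5A.Pr1 q h) (Q5A.Pr0 q h) 1 (Q5A.Pc1 q h) (Q5A.Pc0 q h)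
      (Q5A.Pc1 q h) (Q5A.Pc0 q h) (Q5A.PR q h) rfl hR T
      (fun x hx => hlin4 x (hT hx))
      (fun x hx => by simpa using hmonT x (hT hx))
      (fun x hx => hmonT x (hT hx))) (Q5A.ndPR q h)
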